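/- Let R ≥ 1/2 and let F ∈ C^∞([−R,R]). Fix either sign ±. Then the function defined for y ≠ ±1/2 by f_±(y) = ((y ∓ 1/2)/(y ± h(y))) · ∫₀¹ (1 ± h'(±1/2 + t(y ∓ 1/2))) F(±1/2 + t(y ∓ 1/2)) dt extends to a function f_± ∈ C^∞([−R,R]) which solves the resolvent equation ((y ± h(y))/(1 ± h'(y))) f_±'(y) + f_±(y) = F(y) for all y ∈ [−R,R]; equivalently, (I − L_±)f_± = F. Moreover, if F_−, F_+ ∈ C^∞([−R,R]) satisfy F_−(−y) = −F_+(y) for all y, then the corresponding solutions satisfy f_−(−y) = −f_+(y) for all y. -/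

import Mathlib

open Real MeasureTheory intervalIntegral

/-- The height function `h(y) = √(2 + y²) − 2`. -/
noncomputable def hfun (y : ℝ) : ℝ := Real.sqrt (2 + y ^ 2) - 2

/-- The explicit solution formula for the resolvent equation `(I − L_±)f = F`,
valid away from `y = ±1/2`; the sign is encoded by `σ ∈ {1, −1}`. -/
noncomputable def resolventSol (σ : ℝ) (F : ℝ → ℝ) (y : ℝ) : ℝ :=
  ((y - σ / 2) / (y + σ * hfun y)) *
    ∫ t in (0:ℝ)..1,
      (1 + σ * deriv hfun (σ / 2 + t * (y - σ / 2))) * F (σ / 2 + t * (y - σ / 2))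

/-! ### Auxiliary lemmas -/

lemma two_add_sq_pos (y : ℝ) : 0 < 2 + y ^ 2 := by positivity

lemma sqrt2_pos (y : ℝ) : 0 < Real.sqrt (2 + y ^ 2) :=
  Real.sqrt_pos.2 (two_add_sq_pos y)

lemma sq_sqrt2 (y : ℝ) : Real.sqrt (2 + y ^ 2) ^ 2 = 2 + y ^ 2 :=
  Real.sq_sqrt (two_add_sq_pos y).le

lemma abs_lt_sqrt2 (y : ℝ) : |y| < Real.sqrt (2 + y ^ 2) := by
  rw [← Real.sqrt_sq_eq_abs]
  exact Real.sqrt_lt_sqrt (sq_nonneg y) (by linarith)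

lemma contDiff_sqrt2 : ContDiff ℝ (⊤ : ℕ∞) (fun y : ℝ => Real.sqrt (2 + y ^ 2)) :=
  (contDiff_const.add (contDiff_id.pow 2)).sqrt fun y => (two_add_sq_pos y).ne'

lemma hasDerivAt_hfun (y : ℝ) :
    HasDerivAt hfun (y / Real.sqrt (2 + y ^ 2)) y := by
  have h1 : HasDerivAt (fun y : ℝ => 2 + y ^ 2) (2 * y) y := by
    simpa using (hasDerivAt_pow 2 y).const_add 2
  have h2 := (Real.hasDerivAt_sqrt (two_add_sq_pos y).ne').comp y h1
  have h3 : HasDerivAt hfun (1 / (2 * Real.sqrt (2 + y ^ 2)) * (2 * y)) y := h2.sub_const 2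
  convert h3 using 1
  have := (sqrt2_pos y).ne'
  field_simp

lemma deriv_hfun (y : ℝ) : deriv hfun y = y / Real.sqrt (2 + y ^ 2) :=
  (hasDerivAt_hfun y).deriv

lemma contDiff_hfun : ContDiff ℝ (⊤ : ℕ∞) hfun :=
  contDiff_sqrt2.sub contDiff_const

lemma contDiff_deriv_hfun : ContDiff ℝ (⊤ : ℕ∞) (deriv hfun) := by
  have : deriv hfun = fun y => y / Real.sqrt (2 + y ^ 2) := funext deriv_hfun
  rw [this]
  exact contDiff_id.div contDiff_sqrt2 fun y => (sqrt2_pos y).ne'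

lemma abs_deriv_hfun_lt (y : ℝ) : |deriv hfun y| < 1 := by
  rw [deriv_hfun, abs_div, abs_of_pos (sqrt2_pos y), div_lt_one (sqrt2_pos y)]
  exact abs_lt_sqrt2 y

open scoped ContDiff in
lemma one_le_inf : (1 : WithTop ℕ∞) ≤ ∞ := by exact_mod_cast le_top

open scoped ContDiff in
lemma inf_add_one_le : ∞ + 1 ≤ ∞ := by exact_mod_cast le_top

lemma one_add_deriv_pos (σ : ℝ) (hσ : σ = 1 ∨ σ = -1) (y : ℝ) :
    0 < 1 + σ * deriv hfun y := by
  have h2 := abs_deriv_hfun_lt y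
  rw [abs_lt] at h2
  rcases hσ with h | h <;> subst h <;> nlinarith [h2.1, h2.2]

/-- `B σ y`, the smooth nonvanishing factor with `y + σ h(y) = (y - σ/2) B σ y`. -/
noncomputable def Bfun (σ y : ℝ) : ℝ := 4 / (Real.sqrt (2 + y ^ 2) + 2 - σ * y)

lemma Bden_pos (σ : ℝ) (hσ : σ = 1 ∨ σ = -1) (y : ℝ) :
    0 < Real.sqrt (2 + y ^ 2) + 2 - σ * y := by
  have h := abs_lt_sqrt2 y
  have h1 : y ≤ |y| := le_abs_self y
  have h2 : -y ≤ |y| := neg_le_abs y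
  rcases hσ with h3 | h3 <;> subst h3 <;> simp <;> nlinarith

lemma Bfun_pos (σ : ℝ) (hσ : σ = 1 ∨ σ = -1) (y : ℝ) : 0 < Bfun σ y :=
  div_pos four_pos (Bden_pos σ hσ y)

lemma contDiff_Bfun (σ : ℝ) (hσ : σ = 1 ∨ σ = -1) : ContDiff ℝ (⊤ : ℕ∞) (Bfun σ) :=
  contDiff_const.div ((contDiff_sqrt2.add contDiff_const).sub (contDiff_const.mul contDiff_id))
    fun y => (Bden_pos σ hσ y).ne'

lemma A_factor (σ : ℝ) (hσ : σ = 1 ∨ σ = -1) (y : ℝ) :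
    y + σ * hfun y = (y - σ / 2) * Bfun σ y := by
  have hs := sq_sqrt2 y
  have hd := (Bden_pos σ hσ y).ne'
  have hσ2 : σ ^ 2 = 1 := by rcases hσ with h | h <;> subst h <;> norm_num
  unfold Bfun hfun
  rw [← mul_div_assoc, eq_div_iff hd]
  linear_combination σ * hs + (2 * y - Real.sqrt (2 + y ^ 2) * y) * hσ2

/-- The integrand `(1 + σ h') F`. -/
noncomputable def gfun (σ : ℝ) (F : ℝ → ℝ) (s : ℝ) : ℝ := (1 + σ * deriv hfun s) * F s

/-- The numerator integral. -/
noncomputable def Gfun (σ : ℝ) (F : ℝ → ℝ) (y : ℝ) : ℝ :=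
  ∫ t in (0:ℝ)..1, gfun σ F (σ / 2 + t * (y - σ / 2))

/-- The smooth solution. -/
noncomputable def sol (σ : ℝ) (F : ℝ → ℝ) (y : ℝ) : ℝ := Gfun σ F y / Bfun σ y

lemma contDiff_gfun (σ : ℝ) (F : ℝ → ℝ) (hF : ContDiff ℝ (⊤ : ℕ∞) F) :
    ContDiff ℝ (⊤ : ℕ∞) (gfun σ F) :=
  (contDiff_const.add (contDiff_const.mul contDiff_deriv_hfun)).mul hF

/-! ### Smoothness of parametric integrals -/

lemma hasDerivAt_param (w w' : ℝ × ℝ → ℝ)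
    (hw : ContDiff ℝ (⊤ : ℕ∞) w)
    (hdw : ∀ t x : ℝ, HasDerivAt (fun z => w (t, z)) (w' (t, x)) x)
    (hw'c : Continuous w') (y : ℝ) :
    HasDerivAt (fun x => ∫ t in (0:ℝ)..1, w (t, x)) (∫ t in (0:ℝ)..1, w' (t, y)) y := by
  obtain ⟨C, hC⟩ :=
    (isCompact_Icc.prod isCompact_Icc :
      IsCompact ((Set.Icc (0:ℝ) 1) ×ˢ (Set.Icc (y - 1) (y + 1)))).exists_bound_of_continuousOn
      hw'c.continuousOn
  have key := intervalIntegral.hasDerivAt_integral_of_dominated_loc_of_deriv_le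
    (F := fun x t => w (t, x)) (F' := fun x t => w' (t, x)) (x₀ := y) (s := Metric.ball y 1)
    (a := (0:ℝ)) (b := 1) (bound := fun _ => C) (μ := volume) (Metric.ball_mem_nhds y one_pos)
    (Filter.Eventually.of_forall fun x =>
      (hw.continuous.comp (continuous_id.prodMk continuous_const)).aestronglyMeasurable)
    ((hw.continuous.comp (continuous_id.prodMk continuous_const)).intervalIntegrable 0 1)
    ((hw'c.comp (continuous_id.prodMk continuous_const)).aestronglyMeasurable)
    (Filter.Eventually.of_forall ?_)
    intervalIntegrable_const
    (Filter.Eventually.of_forall fun t _ x _ => hdw t x)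
  · exact key.2
  · intro t ht x hx
    rw [Set.uIoc_of_le (by norm_num : (0:ℝ) ≤ 1)] at ht
    rw [Metric.mem_ball, Real.dist_eq, abs_lt] at hx
    exact hC (t, x) (Set.mk_mem_prod ⟨ht.1.le, ht.2⟩ ⟨by linarith, by linarith⟩)

lemma param_contDiff : ∀ (n : ℕ) (w : ℝ × ℝ → ℝ), ContDiff ℝ (⊤ : ℕ∞) w →
    ContDiff ℝ (n : ℕ∞) (fun y => ∫ t in (0:ℝ)..1, w (t, y)) := by
  intro n
  induction n with
  | zero =>
    intro w hw
    refine (contDiff_zero.2 ?_).of_le (by simp)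
    exact intervalIntegral.continuous_parametric_intervalIntegral_of_continuous'
      (f := fun x t => w (t, x))
      (hw.continuous.comp (continuous_snd.prodMk continuous_fst)) 0 1
  | succ n ih =>
    intro w hw
    set w' : ℝ × ℝ → ℝ := fun p => deriv (fun z => w (p.1, z)) p.2 with hw'def
    have hdw : ∀ t x : ℝ, HasDerivAt (fun z => w (t, z)) (w' (t, x)) x := by
      intro t x
      have hcomp : ContDiff ℝ (⊤ : ℕ∞) (fun z => w (t, z)) :=
        hw.comp (contDiff_const.prodMk contDiff_id)
      exact (hcomp.differentiable (by simp) x).hasDerivAt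
    have hw' : ContDiff ℝ (⊤ : ℕ∞) w' := by
      have heq : w' = fun p => fderiv ℝ w p (0, 1) := by
        funext p
        have h1 : HasDerivAt (fun z : ℝ => (p.1, z)) ((0:ℝ), (1:ℝ)) p.2 :=
          (hasDerivAt_const p.2 p.1).prodMk (hasDerivAt_id p.2)
        have h2 := ((hw.differentiable (by simp)) p).hasFDerivAt.comp_hasDerivAt p.2 h1
        exact h2.deriv
      rw [heq]
      exact (hw.fderiv_right inf_add_one_le).clm_apply contDiff_const
    have key : ∀ y : ℝ, HasDerivAt (fun x => ∫ t in (0:ℝ)..1, w (t, x))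
        (∫ t in (0:ℝ)..1, w' (t, y)) y :=
      hasDerivAt_param w w' hw hdw hw'.continuous
    have hcast : (((n + 1 : ℕ) : ℕ∞) : WithTop ℕ∞) = (((n : ℕ∞) : WithTop ℕ∞)) + 1 := by
      push_cast
      ring
    rw [hcast, contDiff_succ_iff_deriv]
    refine ⟨fun y => (key y).differentiableAt, by simp, ?_⟩
    have hde : deriv (fun x => ∫ t in (0:ℝ)..1, w (t, x)) =
        fun y => ∫ t in (0:ℝ)..1, w' (t, y) := funext fun y => (key y).deriv
    rw [hde]
    exact ih w' hw'

lemma contDiff_Gfun (σ : ℝ) (F : ℝ → ℝ) (hF : ContDiff ℝ (⊤ : ℕ∞) F) :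
    ContDiff ℝ (⊤ : ℕ∞) (Gfun σ F) := by
  have hw : ContDiff ℝ (⊤ : ℕ∞) (fun p : ℝ × ℝ => gfun σ F (σ / 2 + p.1 * (p.2 - σ / 2))) :=
    (contDiff_gfun σ F hF).comp
      (contDiff_const.add (contDiff_fst.mul (contDiff_snd.sub contDiff_const)))
  rw [contDiff_infty]
  exact fun n => param_contDiff n _ hw

lemma contDiff_sol (σ : ℝ) (hσ : σ = 1 ∨ σ = -1) (F : ℝ → ℝ) (hF : ContDiff ℝ (⊤ : ℕ∞) F) :
    ContDiff ℝ (⊤ : ℕ∞) (sol σ F) :=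
  (contDiff_Gfun σ F hF).div (contDiff_Bfun σ hσ) fun y => (Bfun_pos σ hσ y).ne'

/-! ### The key identities -/

lemma sol_eq_resolventSol (σ : ℝ) (hσ : σ = 1 ∨ σ = -1) (F : ℝ → ℝ) (y : ℝ)
    (hy : y ≠ σ / 2) : sol σ F y = resolventSol σ F y := by
  have h1 : resolventSol σ F y = ((y - σ / 2) / (y + σ * hfun y)) * Gfun σ F y := rfl
  have h2 : y - σ / 2 ≠ 0 := sub_ne_zero.2 hy
  have h3 := (Bfun_pos σ hσ y).ne'
  rw [h1, A_factor σ hσ y, sol]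
  rw [div_mul_eq_div_div, div_self h2, one_div, inv_mul_eq_div]

lemma A_mul_sol (σ : ℝ) (hσ : σ = 1 ∨ σ = -1) (F : ℝ → ℝ) (y : ℝ) :
    (y + σ * hfun y) * sol σ F y = ∫ s in (σ / 2)..y, gfun σ F s := by
  rcases eq_or_ne y (σ / 2) with h | h
  · subst h
    rw [intervalIntegral.integral_same, A_factor σ hσ _, sub_self, zero_mul, zero_mul]
  · have h2 : y - σ / 2 ≠ 0 := sub_ne_zero.2 h
    have h3 := (Bfun_pos σ hσ y).ne'
    rw [A_factor σ hσ y, sol, mul_assoc, mul_comm (Bfun σ y), div_mul_cancel₀ _ h3, Gfun]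
    have h4 : ∀ t : ℝ, σ / 2 + t * (y - σ / 2) = (y - σ / 2) * t + σ / 2 := fun t => by ring
    simp only [h4]
    rw [intervalIntegral.integral_comp_mul_add (f := gfun σ F) h2 (σ / 2)]
    have h5 : (y - σ / 2) * 0 + σ / 2 = σ / 2 := by ring
    have h6 : (y - σ / 2) * 1 + σ / 2 = y := by ring
    rw [h5, h6, smul_eq_mul, ← mul_assoc, mul_inv_cancel₀ h2, one_mul]

lemma sol_ode (σ : ℝ) (hσ : σ = 1 ∨ σ = -1) (F : ℝ → ℝ) (hF : ContDiff ℝ (⊤ : ℕ∞) F)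
    (y : ℝ) :
    ((y + σ * hfun y) / (1 + σ * deriv hfun y)) * deriv (sol σ F) y + sol σ F y = F y := by
  have hg : Continuous (gfun σ F) := (contDiff_gfun σ F hF).continuous
  have hP : HasDerivAt (fun u => ∫ s in (σ / 2)..u, gfun σ F s) (gfun σ F y) y :=
    (hg.integral_hasStrictDerivAt (σ / 2) y).hasDerivAt
  have hsol : HasDerivAt (sol σ F) (deriv (sol σ F) y) y :=
    (((contDiff_sol σ hσ F hF).differentiable (by simp)) y).hasDerivAt
  have hA : HasDerivAt (fun y => y + σ * hfun y) (1 + σ * deriv hfun y) y := by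
    have : HasDerivAt (fun y => y + σ * hfun y) (1 + σ * (y / Real.sqrt (2 + y ^ 2))) y :=
      (hasDerivAt_id' y).add ((hasDerivAt_hfun y).const_mul σ)
    simpa [deriv_hfun] using this
  have hprod : HasDerivAt (fun y => (y + σ * hfun y) * sol σ F y)
      ((1 + σ * deriv hfun y) * sol σ F y + (y + σ * hfun y) * deriv (sol σ F) y) y :=
    hA.mul hsol
  have hPeq : (fun y => (y + σ * hfun y) * sol σ F y) =
      fun u => ∫ s in (σ / 2)..u, gfun σ F s := funext fun y => A_mul_sol σ hσ F y
  rw [hPeq] at hprod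
  have heq := hprod.unique hP
  have hA' := (one_add_deriv_pos σ hσ y).ne'
  rw [gfun] at heq
  field_simp
  linarith [heq]

lemma main_sol (σ : ℝ) (hσ : σ = 1 ∨ σ = -1) (F : ℝ → ℝ) (hF : ContDiff ℝ (⊤ : ℕ∞) F) :
    ContDiff ℝ (⊤ : ℕ∞) (sol σ F) ∧
      (∀ y : ℝ, y ≠ σ / 2 → sol σ F y = resolventSol σ F y) ∧
      (∀ y : ℝ,
        ((y + σ * hfun y) / (1 + σ * deriv hfun y)) * deriv (sol σ F) y + sol σ F y = F y) :=
  ⟨contDiff_sol σ hσ F hF, fun y hy => sol_eq_resolventSol σ hσ F y hy,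
    fun y => sol_ode σ hσ F hF y⟩

/-! ### Odd symmetry -/

lemma deriv_hfun_neg (y : ℝ) : deriv hfun (-y) = -deriv hfun y := by
  rw [deriv_hfun, deriv_hfun, neg_pow]
  simp [neg_div]

lemma sol_neg (Fm Fp : ℝ → ℝ) (hodd : ∀ y, Fm (-y) = -Fp y) (y : ℝ) :
    sol (-1) Fm (-y) = -sol 1 Fp y := by
  have hB : Bfun (-1) (-y) = Bfun 1 y := by
    unfold Bfun
    rw [neg_pow]
    ring_nf
  have hG : Gfun (-1) Fm (-y) = -Gfun 1 Fp y := by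
    unfold Gfun
    rw [← intervalIntegral.integral_neg]
    apply intervalIntegral.integral_congr
    intro t _
    show gfun (-1) Fm (-1 / 2 + t * (-y - -1 / 2)) = -gfun 1 Fp (1 / 2 + t * (y - 1 / 2))
    have h1 : (-1 : ℝ) / 2 + t * (-y - -1 / 2) = -((1:ℝ) / 2 + t * (y - 1 / 2)) := by ring
    rw [h1]
    unfold gfun
    rw [deriv_hfun_neg, hodd]
    ring
  unfold sol
  rw [hB, hG, neg_div]

theorem resolvent_equation (R : ℝ) (hR : 1 / 2 ≤ R) :
    (∀ σ : ℝ, σ = 1 ∨ σ = -1 → ∀ F : ℝ → ℝ, ContDiff ℝ (⊤ : ℕ∞) F →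
      ∃ f : ℝ → ℝ, ContDiff ℝ (⊤ : ℕ∞) f ∧
        (∀ y ∈ Set.Icc (-R) R, y ≠ σ / 2 → f y = resolventSol σ F y) ∧
        (∀ y ∈ Set.Icc (-R) R,
          ((y + σ * hfun y) / (1 + σ * deriv hfun y)) * deriv f y + f y = F y)) ∧
    (∀ Fm Fp : ℝ → ℝ, ContDiff ℝ (⊤ : ℕ∞) Fm → ContDiff ℝ (⊤ : ℕ∞) Fp →
      (∀ y, Fm (-y) = -Fp y) →
      ∃ fm fp : ℝ → ℝ, ContDiff ℝ (⊤ : ℕ∞) fm ∧ ContDiff ℝ (⊤ : ℕ∞) fp ∧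
        (∀ y ∈ Set.Icc (-R) R, y ≠ -(1 / 2) → fm y = resolventSol (-1) Fm y) ∧
        (∀ y ∈ Set.Icc (-R) R, y ≠ 1 / 2 → fp y = resolventSol 1 Fp y) ∧
        (∀ y ∈ Set.Icc (-R) R,
          ((y - hfun y) / (1 - deriv hfun y)) * deriv fm y + fm y = Fm y) ∧
        (∀ y ∈ Set.Icc (-R) R,
          ((y + hfun y) / (1 + deriv hfun y)) * deriv fp y + fp y = Fp y) ∧
        (∀ y ∈ Set.Icc (-R) R, fm (-y) = -fp y)) := by
  constructor
  · intro σ hσ F hF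
    obtain ⟨h1, h2, h3⟩ := main_sol σ hσ F hF
    exact ⟨sol σ F, h1, fun y _ hy => h2 y hy, fun y _ => h3 y⟩
  · intro Fm Fp hFm hFp hodd
    obtain ⟨m1, m2, m3⟩ := main_sol (-1) (Or.inr rfl) Fm hFm
    obtain ⟨p1, p2, p3⟩ := main_sol 1 (Or.inl rfl) Fp hFp
    refine ⟨sol (-1) Fm, sol 1 Fp, m1, p1, ?_, ?_, ?_, ?_, ?_⟩
    · intro y _ hy
      exact m2 y (by rw [show (-1:ℝ)/2 = -(1/2) by norm_num]; exact hy)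
    · intro y _ hy
      exact p2 y (by rw [show (1:ℝ)/2 = 1/2 by norm_num]; exact hy)
    · intro y _
      have := m3 y
      simpa [neg_one_mul, sub_eq_add_neg] using this
    · intro y _
      have := p3 y
      simpa using this
    · intro y _
      exact sol_neg Fm Fp hodd y
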